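/- Let n ≥ 1 and fix a finite family of linear symmetries for an object with n indices. For every dimension k > n, the number of independent components satisfies the recursion f(k) = Σ_{j=1}^{k-1} (−1)^{j−1} · f(k−j) · C(k, j), where C(k, j) denotes the binomial coefficient. -/

import Mathlib

/-- The subspace of indexed objects `A : (Fin n → Fin k) → ℝ` satisfying the
homogeneous system induced by a family of `s` linear symmetries, the `l`-th
symmetry having `p l` terms with coefficients `a l j` and permutations `π l j`:
for every index assignment `ι`, `∑ j, a l j * A (ι ∘ π l j) = 0`. -/
def solSpace (n k s : ℕ) (p : Fin s → ℕ)
    (a : (l : Fin s) → Fin (p l) → ℝ)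
    (π : (l : Fin s) → Fin (p l) → Equiv.Perm (Fin n)) :
    Submodule ℝ ((Fin n → Fin k) → ℝ) where
  carrier := {A | ∀ (l : Fin s) (ι : Fin n → Fin k),
    ∑ j : Fin (p l), a l j * A (ι ∘ (π l j)) = 0}
  add_mem' := by
    intro A B hA hB l ι
    have hA' := hA l ι
    have hB' := hB l ι
    simp only [Pi.add_apply, mul_add, Finset.sum_add_distrib]
    rw [hA', hB', add_zero]
  zero_mem' := by
    intro l ι
    simp
  smul_mem' := by
    intro c A hA l ι
    have hA' := hA l ι
    simp only [Pi.smul_apply, smul_eq_mul, mul_left_comm, ← Finset.mul_sum]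
    rw [hA', mul_zero]

open Finset

/-- solutions supported on surjective index assignments -/
def surjSol (n m s : ℕ) (p : Fin s → ℕ)
    (a : (l : Fin s) → Fin (p l) → ℝ)
    (π : (l : Fin s) → Fin (p l) → Equiv.Perm (Fin n)) :
    Submodule ℝ ((Fin n → Fin m) → ℝ) :=
  solSpace n m s p a π ⊓
  { carrier := {A | ∀ ι : Fin n → Fin m, ¬ Function.Surjective ι → A ι = 0}
    add_mem' := by intro A B hA hB ι hι; simp [hA ι hι, hB ι hι]
    zero_mem' := by intro ι _; rfl
    smul_mem' := by intro c A hA ι hι; simp [hA ι hι] }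

variable {n k : ℕ}

/-- the piece of `A` associated to the subset `S`, transported to `Fin S.card`. -/
noncomputable def toPieces (A : (Fin n → Fin k) → ℝ) (S : Finset (Fin k)) :
    (Fin n → Fin S.card) → ℝ :=
  fun κ => if Function.Surjective κ then A (fun i => (S.orderIsoOfFin rfl (κ i) : Fin k)) else 0

/-- the canonical surjective companion of `ι` onto its image. -/
noncomputable def canonKappa (ι : Fin n → Fin k) : Fin n → Fin (image ι univ).card :=
  fun i => ((image ι univ).orderIsoOfFin rfl).symm ⟨ι i, mem_image_of_mem ι (mem_univ i)⟩

noncomputable def ofPieces (B : (S : Finset (Fin k)) → (Fin n → Fin S.card) → ℝ) :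
    (Fin n → Fin k) → ℝ :=
  fun ι => B (image ι univ) (canonKappa ι)

lemma canon_spec (ι : Fin n → Fin k) (i : Fin n) :
    ((image ι univ).orderIsoOfFin rfl (canonKappa ι i) : Fin k) = ι i := by
  simp [canonKappa]

lemma canon_surj (ι : Fin n → Fin k) : Function.Surjective (canonKappa ι) := by
  intro y
  obtain ⟨i, -, hi⟩ := Finset.mem_image.mp ((image ι univ).orderIsoOfFin rfl y).2
  refine ⟨i, ?_⟩
  have h1 : (⟨ι i, mem_image_of_mem ι (mem_univ i)⟩ : {x // x ∈ image ι univ})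
      = (image ι univ).orderIsoOfFin rfl y := Subtype.ext hi
  simp [canonKappa, h1]

lemma ofPieces_eq (B : (S : Finset (Fin k)) → (Fin n → Fin S.card) → ℝ)
    {S : Finset (Fin k)} (ι : Fin n → Fin k)
    (h : image ι univ = S) (κ : Fin n → Fin S.card)
    (hκ : ∀ i, ((S.orderIsoOfFin rfl (κ i)) : Fin k) = ι i) :
    ofPieces B ι = B S κ := by
  subst h
  show B _ (canonKappa ι) = B _ κ
  congr 1
  funext i
  have h1 : (⟨ι i, mem_image_of_mem ι (mem_univ i)⟩ : {x // x ∈ image ι univ})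
      = (image ι univ).orderIsoOfFin rfl (κ i) := Subtype.ext (hκ i).symm
  simp [canonKappa, h1]

lemma image_comp_perm (ι : Fin n → Fin k) (σ : Equiv.Perm (Fin n)) :
    image (ι ∘ σ) univ = image ι univ := by
  ext x
  simp only [mem_image, mem_univ, true_and, Function.comp_apply]
  constructor
  · rintro ⟨i, rfl⟩; exact ⟨σ i, rfl⟩
  · rintro ⟨i, rfl⟩; exact ⟨σ.symm i, by simp⟩

section Main
variable {s : ℕ} {p : Fin s → ℕ}
  {a : (l : Fin s) → Fin (p l) → ℝ}
  {π : (l : Fin s) → Fin (p l) → Equiv.Perm (Fin n)}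

lemma toPieces_mem {A : (Fin n → Fin k) → ℝ} (hA : A ∈ solSpace n k s p a π)
    (S : Finset (Fin k)) : toPieces A S ∈ surjSol n S.card s p a π := by
  constructor
  · intro l κ
    by_cases hκ : Function.Surjective κ
    · have hterm : ∀ j : Fin (p (l)), toPieces A S (κ ∘ (π l j))
          = (fun ι' => A ι') ((fun i => ((S.orderIsoOfFin rfl (κ i)) : Fin k)) ∘ (π l j)) := by
        intro j
        have hsurj : Function.Surjective (κ ∘ (π l j)) := hκ.comp (π l j).surjective
        simp only [toPieces, if_pos hsurj]
        rfl
      simp only [hterm]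
      exact hA l _
    · have hterm : ∀ j : Fin (p l), toPieces A S (κ ∘ (π l j)) = 0 := by
        intro j
        have : ¬ Function.Surjective (κ ∘ (π l j)) := by
          intro hs
          exact hκ (hs.of_comp)
        simp [toPieces, this]
      simp [hterm]
  · intro κ hκ
    simp [toPieces, hκ]

lemma ofPieces_mem {B : (S : Finset (Fin k)) → (Fin n → Fin S.card) → ℝ}
    (hB : ∀ S, B S ∈ surjSol n S.card s p a π) :
    ofPieces B ∈ solSpace n k s p a π := by
  intro l ι
  have hterm : ∀ j : Fin (p l), ofPieces B (ι ∘ (π l j))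
      = B (image ι univ) ((canonKappa ι) ∘ (π l j)) := by
    intro j
    refine ofPieces_eq B _ (image_comp_perm ι (π l j)) _ (fun i => ?_)
    exact canon_spec ι ((π l j) i)
  simp only [hterm]
  exact (hB (image ι univ)).1 l (canonKappa ι)

noncomputable def pieceEquiv (n k s : ℕ) (p : Fin s → ℕ)
    (a : (l : Fin s) → Fin (p l) → ℝ)
    (π : (l : Fin s) → Fin (p l) → Equiv.Perm (Fin n)) :
    (solSpace n k s p a π) ≃ₗ[ℝ] ((S : Finset (Fin k)) → surjSol n S.card s p a π) where
  toFun A := fun S => ⟨toPieces A.1 S, toPieces_mem A.2 S⟩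
  map_add' A B := by
    funext S
    apply Subtype.ext
    funext κ
    show toPieces (A.1 + B.1) S κ = toPieces A.1 S κ + toPieces B.1 S κ
    simp only [toPieces, Pi.add_apply]
    split <;> simp
  map_smul' c A := by
    funext S
    apply Subtype.ext
    funext κ
    show toPieces (c • A.1) S κ = c • toPieces A.1 S κ
    simp only [toPieces, Pi.smul_apply, smul_eq_mul]
    split <;> simp
  invFun B := ⟨ofPieces (fun S => (B S).1), ofPieces_mem (fun S => (B S).2)⟩
  left_inv A := by
    apply Subtype.ext
    funext ι
    show ofPieces (fun S => toPieces A.1 S) ι = A.1 ι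
    show toPieces A.1 (image ι univ) (canonKappa ι) = A.1 ι
    rw [toPieces, if_pos (canon_surj ι)]
    have hfun : (fun i => ((((image ι univ).orderIsoOfFin rfl) (canonKappa ι i)) : Fin k)) = ι :=
      funext fun i => canon_spec ι i
    rw [hfun]
  right_inv B := by
    funext S
    apply Subtype.ext
    funext κ
    show toPieces (ofPieces (fun T => (B T).1)) S κ = (B S).1 κ
    by_cases hκ : Function.Surjective κ
    · rw [toPieces, if_pos hκ]
      refine ofPieces_eq _ _ ?_ κ (fun i => rfl)
      · ext x
        simp only [mem_image, mem_univ, true_and]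
        constructor
        · rintro ⟨i, rfl⟩; exact (S.orderIsoOfFin rfl (κ i)).2
        · intro hx
          obtain ⟨i, hi⟩ := hκ ((S.orderIsoOfFin rfl).symm ⟨x, hx⟩)
          exact ⟨i, by rw [hi]; simp⟩
    · rw [toPieces, if_neg hκ]
      exact ((B S).2.2 κ hκ).symm

end Main

noncomputable def gdim (n s : ℕ) (p : Fin s → ℕ)
    (a : (l : Fin s) → Fin (p l) → ℝ)
    (π : (l : Fin s) → Fin (p l) → Equiv.Perm (Fin n)) (m : ℕ) : ℕ :=
  Module.finrank ℝ (surjSol n m s p a π)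

lemma finrank_solSpace (n k s : ℕ) (p : Fin s → ℕ)
    (a : (l : Fin s) → Fin (p l) → ℝ)
    (π : (l : Fin s) → Fin (p l) → Equiv.Perm (Fin n)) :
    Module.finrank ℝ (solSpace n k s p a π)
      = ∑ m ∈ range (k + 1), k.choose m * gdim n s p a π m := by
  rw [LinearEquiv.finrank_eq (pieceEquiv n k s p a π), Module.finrank_pi_fintype]
  have h := Finset.sum_powerset_apply_card (fun m => gdim n s p a π m)
    (x := (univ : Finset (Fin k)))
  rw [powerset_univ] at h
  simpa [gdim, card_univ, smul_eq_mul] using h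

lemma gdim_zero (n s : ℕ) (hn : 1 ≤ n) (p : Fin s → ℕ)
    (a : (l : Fin s) → Fin (p l) → ℝ)
    (π : (l : Fin s) → Fin (p l) → Equiv.Perm (Fin n)) :
    gdim n s p a π 0 = 0 := by
  haveI : IsEmpty (Fin n → Fin 0) := ⟨fun f => (f ⟨0, hn⟩).elim0⟩
  haveI : Subsingleton ((Fin n → Fin 0) → ℝ) :=
    ⟨fun f g => funext fun x => (IsEmpty.false x).elim⟩
  haveI : Subsingleton (surjSol n 0 s p a π) := inferInstance
  exact Module.finrank_zero_of_subsingleton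


lemma gdim_big (n s m : ℕ) (hm : n < m) (p : Fin s → ℕ)
    (a : (l : Fin s) → Fin (p l) → ℝ)
    (π : (l : Fin s) → Fin (p l) → Equiv.Perm (Fin n)) :
    gdim n s p a π m = 0 := by
  have hbot : surjSol n m s p a π = ⊥ := by
    rw [eq_bot_iff]
    intro A hA
    have : A = 0 := by
      funext ι
      refine hA.2 ι (fun hs => ?_)
      have := Fintype.card_le_of_surjective ι hs
      simp at this
      omega
    simp [this]
  rw [gdim, hbot]
  exact finrank_bot ℝ _

lemma choose_swap {k j m : ℕ} (hj1 : 1 ≤ j) (hj : j ≤ k) :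
    k.choose j * (k - j).choose m = k.choose m * (k - m).choose j := by
  by_cases h : j + m ≤ k
  · have e1 := Nat.choose_mul (n := k) (Nat.le_add_right j m)
    have e2 := Nat.choose_mul (n := k) (Nat.le_add_left m j)
    rw [Nat.add_sub_cancel_left] at e1
    rw [Nat.add_sub_cancel] at e2
    have e3 : (j + m).choose j = (j + m).choose m := by
      have := Nat.choose_symm (Nat.le_add_left m j)
      rwa [Nat.add_sub_cancel] at this
    rw [← e1, ← e2, e3]
  · have h1 : k - j < m := by omega
    have h2 : k - m < j := by omega
    rw [Nat.choose_eq_zero_of_lt h1, Nat.choose_eq_zero_of_lt h2, Nat.mul_zero, Nat.mul_zero]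

lemma alt_sum_inner (k m : ℕ) (hm : 1 ≤ m) (hmk : m < k) :
    ∑ j ∈ Icc 1 (k - 1), (-1 : ℤ) ^ (j - 1) * (k.choose j) * ((k - j).choose m)
      = k.choose m := by
  have hstep : ∀ j ∈ Icc 1 (k - 1),
      (-1 : ℤ) ^ (j - 1) * (k.choose j) * ((k - j).choose m)
        = (k.choose m) * ((-1 : ℤ) ^ (j - 1) * ((k - m).choose j)) := by
    intro j hj
    rw [mem_Icc] at hj
    have h := choose_swap (k := k) (j := j) (m := m) (by omega) (by omega)
    have h' : ((k.choose j : ℤ) * ((k - j).choose m)) = (k.choose m : ℤ) * ((k - m).choose j) := by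
      exact_mod_cast congrArg (Nat.cast : ℕ → ℤ) h
    calc (-1 : ℤ) ^ (j - 1) * (k.choose j) * ((k - j).choose m)
        = (-1 : ℤ) ^ (j - 1) * ((k.choose j : ℤ) * ((k - j).choose m)) := by ring
      _ = (-1 : ℤ) ^ (j - 1) * ((k.choose m : ℤ) * ((k - m).choose j)) := by rw [h']
      _ = (k.choose m) * ((-1 : ℤ) ^ (j - 1) * ((k - m).choose j)) := by ring
  rw [Finset.sum_congr rfl hstep, ← Finset.mul_sum]
  set r := k - m with hr
  have hr1 : 1 ≤ r := by omega
  have hrk : r ≤ k - 1 := by omega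
  have htr : ∑ j ∈ Icc 1 (k - 1), (-1 : ℤ) ^ (j - 1) * ((r).choose j)
      = ∑ j ∈ Icc 1 r, (-1 : ℤ) ^ (j - 1) * ((r).choose j) := by
    refine (Finset.sum_subset (Finset.Icc_subset_Icc_right hrk) ?_).symm
    intro x hx hx'
    rw [mem_Icc] at hx hx'
    have : r < x := by omega
    rw [Nat.choose_eq_zero_of_lt this]
    simp
  rw [htr]
  have h0 : ∑ j ∈ range (r + 1), (-1 : ℤ) ^ j * (r.choose j) = 0 :=
    Int.alternating_sum_range_choose_of_ne (by omega)
  have hins : range (r + 1) = insert 0 (Icc 1 r) := by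
    ext x; simp only [mem_range, mem_insert, mem_Icc]; omega
  rw [hins, Finset.sum_insert (by simp)] at h0
  simp only [pow_zero, Nat.choose_zero_right, Nat.cast_one, one_mul] at h0
  have h1 : ∑ j ∈ Icc 1 r, (-1 : ℤ) ^ j * (r.choose j) = -1 := by linarith
  have h2 : ∀ j ∈ Icc 1 r, (-1 : ℤ) ^ (j - 1) * (r.choose j) = -((-1 : ℤ) ^ j * (r.choose j)) := by
    intro j hj
    rw [mem_Icc] at hj
    have hp : (-1 : ℤ) ^ (j - 1) * (-1) = (-1 : ℤ) ^ j := by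
      rw [← pow_succ]; congr 1; omega
    rw [← hp]; ring
  rw [Finset.sum_congr rfl h2, Finset.sum_neg_distrib, h1]
  simp

lemma f_eq (n s : ℕ) (hn : 1 ≤ n) (p : Fin s → ℕ)
    (a : (l : Fin s) → Fin (p l) → ℝ)
    (π : (l : Fin s) → Fin (p l) → Equiv.Perm (Fin n)) (k : ℕ) :
    (Module.finrank ℝ (solSpace n k s p a π) : ℤ)
      = ∑ m ∈ Icc 1 n, (k.choose m : ℤ) * (gdim n s p a π m : ℤ) := by
  have hnat : ∑ m ∈ range (k + 1), k.choose m * gdim n s p a π m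
      = ∑ m ∈ Icc 1 n, k.choose m * gdim n s p a π m := by
    have h1 : ∑ m ∈ range (k + 1), k.choose m * gdim n s p a π m
        = ∑ m ∈ range (k + n + 2), k.choose m * gdim n s p a π m := by
      refine Finset.sum_subset (Finset.range_subset_range.mpr (by omega)) ?_
      intro x _ hx
      rw [mem_range, not_lt] at hx
      rw [Nat.choose_eq_zero_of_lt (by omega), Nat.zero_mul]
    have h2 : ∑ m ∈ Icc 1 n, k.choose m * gdim n s p a π m
        = ∑ m ∈ range (k + n + 2), k.choose m * gdim n s p a π m := by
      refine Finset.sum_subset ?_ ?_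
      · intro x hx; rw [mem_Icc] at hx; rw [mem_range]; omega
      · intro x _ hx
        rw [mem_Icc, not_and_or] at hx
        rcases hx with hx | hx
        · have hx0 : x = 0 := by omega
          rw [hx0, gdim_zero n s hn p a π, Nat.mul_zero]
        · rw [gdim_big n s x (by omega) p a π, Nat.mul_zero]
    rw [h1, h2]
  rw [finrank_solSpace, hnat]
  push_cast
  rfl


/-- for every dimension `k > n`, the number of independent
components satisfies the recursion
`f(k) = ∑_{j=1}^{k-1} (-1)^(j-1) * f(k-j) * C(k,j)`. -/
theorem numIndepComponents_recursion
    (n s : ℕ) (hn : 1 ≤ n) (p : Fin s → ℕ)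
    (a : (l : Fin s) → Fin (p l) → ℝ)
    (π : (l : Fin s) → Fin (p l) → Equiv.Perm (Fin n))
    (k : ℕ) (hk : n < k) :
    (Module.finrank ℝ (solSpace n k s p a π) : ℤ) =
      ∑ j ∈ Finset.Icc 1 (k - 1),
        (-1 : ℤ) ^ (j - 1) * (Module.finrank ℝ (solSpace n (k - j) s p a π)) *
          (Nat.choose k j) := by
  have hR : ∀ j ∈ Icc 1 (k - 1),
      (-1 : ℤ) ^ (j - 1) * (Module.finrank ℝ (solSpace n (k - j) s p a π)) * (Nat.choose k j)
        = ∑ m ∈ Icc 1 n,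
            ((-1 : ℤ) ^ (j - 1) * (k.choose j) * ((k - j).choose m)) * (gdim n s p a π m : ℤ) := by
    intro j _
    rw [f_eq n s hn p a π (k - j), Finset.mul_sum, Finset.sum_mul]
    refine Finset.sum_congr rfl fun m _ => ?_
    ring
  have hRHS : (∑ j ∈ Finset.Icc 1 (k - 1),
      (-1 : ℤ) ^ (j - 1) * (Module.finrank ℝ (solSpace n (k - j) s p a π)) * (Nat.choose k j))
      = ∑ m ∈ Icc 1 n, (k.choose m : ℤ) * (gdim n s p a π m : ℤ) := by
    rw [Finset.sum_congr rfl hR, Finset.sum_comm]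
    refine Finset.sum_congr rfl fun m hm => ?_
    rw [← Finset.sum_mul]
    rw [mem_Icc] at hm
    rw [alt_sum_inner k m hm.1 (lt_of_le_of_lt hm.2 hk)]
  rw [hRHS, f_eq n s hn p a π k]
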